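/- For 2×2 matrices, the pointwise algebraic identity |dev(R G)| = |sym(G)| and |R G - α I| = |G - α J| holds for all α ∈ ℝ, where G is any 2×2 matrix, R = [[0,1],[-1,0]] is rotation by -90°, acting so that R G corresponds to the rotated gradient ∇⊥ψ when G = ∇ψ, sym(G) = (G + Gᵀ)/2, dev(M) = M - (tr M/2) I, and J = [[0,1],[-1,0]]. -/
import Mathlib

open Matrix BigOperators MeasureTheory RealInnerProductSpace

noncomputable def frob (τ : Matrix (Fin 2) (Fin 2) ℝ) : ℝ :=
  Real.sqrt (∑ i, ∑ j, (τ i j) ^ 2)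

noncomputable def finner (A B : Matrix (Fin 2) (Fin 2) ℝ) : ℝ :=
  ∑ i, ∑ j, A i j * B i j

noncomputable def asym (τ : Matrix (Fin 2) (Fin 2) ℝ) : Matrix (Fin 2) (Fin 2) ℝ :=
  (1 / 2 : ℝ) • (τ - τᵀ)

noncomputable def symMat (τ : Matrix (Fin 2) (Fin 2) ℝ) : Matrix (Fin 2) (Fin 2) ℝ :=
  (1 / 2 : ℝ) • (τ + τᵀ)

noncomputable def devm (τ : Matrix (Fin 2) (Fin 2) ℝ) : Matrix (Fin 2) (Fin 2) ℝ :=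
  τ - (τ.trace / 2) • (1 : Matrix (Fin 2) (Fin 2) ℝ)

noncomputable def Acomp (μ lam : ℝ) (τ : Matrix (Fin 2) (Fin 2) ℝ) :
    Matrix (Fin 2) (Fin 2) ℝ :=
  (1 / (2 * μ)) • (τ - (lam / (2 * (μ + lam)) * τ.trace) • (1 : Matrix (Fin 2) (Fin 2) ℝ))

noncomputable def Jm : Matrix (Fin 2) (Fin 2) ℝ := !![0, 1; -1, 0]

noncomputable def rotm (G : Matrix (Fin 2) (Fin 2) ℝ) : Matrix (Fin 2) (Fin 2) ℝ :=
  Matrix.of fun i j => if j = 0 then G i 1 else -(G i 0)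

/-- pointwise identities |dev(R G)| = |sym(G)| and |R G - αI| = |G - αJ|. -/
theorem rotation_interchanges_dev_sym (G : Matrix (Fin 2) (Fin 2) ℝ) :
    frob (devm (rotm G)) = frob (symMat G) ∧
    ∀ α : ℝ, frob (rotm G - α • (1 : Matrix (Fin 2) (Fin 2) ℝ)) = frob (G - α • Jm) := by
  constructor
  · unfold frob devm symMat rotm
    congr 1
    simp [Matrix.trace, Fin.sum_univ_two, Matrix.sub_apply, Matrix.smul_apply,
      Matrix.one_apply, Matrix.transpose_apply, Matrix.add_apply, Matrix.diag]
    ring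
  · intro α
    unfold frob rotm Jm
    congr 1
    simp [Fin.sum_univ_two, Matrix.sub_apply, Matrix.smul_apply, Matrix.one_apply]
    ring
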